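/- arXiv:2603.16518 — 2 statements merged into one kernel-verified Lean document; each statement's English description precedes it below -/
import Mathlib

section
/- Let F be a number field, let p be a prime ideal of O_F with valuation ord_p, and let a, b, c, d ∈ F with λ = ad - bc ≠ 0. Suppose that for an integer n, 2·min(ord_p(a), ord_p(b) + n, ord_p(c) - n, ord_p(d)) = ord_p(λ). Then each entry of the matrix [[a^2 + bc, b(a+d)], [c(a+d), bc + d^2]], after shifting the (1,2)-entry valuation by n and the (2,1)-entry by -n, has p-adic valuation at least ord_p(λ); that is, ord_p(a^2 + bc) ≥ ord_p(λ), ord_p(b(a+d)) + n ≥ ord_p(λ), ord_p(c(a+d)) - n ≥ ord_p(λ), and ord_p(bc + d^2) ≥ ord_p(λ). -/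
open IsDedekindDomain NumberField

open scoped Classical in
/-- The `p`-adic order `ord_p : F → WithTop ℤ` attached to a prime `p` of the
ring of integers of a number field `F`, with the convention `ord_p(0) = ⊤`. -/
noncomputable def ordp {F : Type*} [Field F] [NumberField F]
    (v : HeightOneSpectrum (𝓞 F)) (x : F) : WithTop ℤ :=
  if hx : x = 0 then ⊤
  else (((-Multiplicative.toAdd (WithZero.unzero
    ((Valuation.ne_zero_iff (v.valuation F)).mpr hx))) : ℤ) : WithTop ℤ)

section Aux

variable {F : Type*} [Field F] [NumberField F] (v : HeightOneSpectrum (𝓞 F))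

lemma ordp_mul (x y : F) : ordp v (x * y) = ordp v x + ordp v y := by
  by_cases hx : x = 0
  · simp [ordp, hx]
  by_cases hy : y = 0
  · simp [ordp, hy]
  have hxy : x * y ≠ 0 := mul_ne_zero hx hy
  simp only [ordp, dif_neg hx, dif_neg hy, dif_neg hxy]
  rw [← WithTop.coe_add, WithTop.coe_eq_coe]
  have h1 : WithZero.unzero ((Valuation.ne_zero_iff (v.valuation F)).mpr hxy)
      = WithZero.unzero ((Valuation.ne_zero_iff (v.valuation F)).mpr hx) *
        WithZero.unzero ((Valuation.ne_zero_iff (v.valuation F)).mpr hy) := by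
    apply WithZero.coe_inj.mp
    simp only [WithZero.coe_mul, WithZero.coe_unzero, map_mul]
  rw [h1, toAdd_mul, neg_add]

lemma ordp_mono {x y : F} (hx : x ≠ 0) (hy : y ≠ 0)
    (h : v.valuation F y ≤ v.valuation F x) : ordp v x ≤ ordp v y := by
  simp only [ordp, dif_neg hx, dif_neg hy, WithTop.coe_le_coe, neg_le_neg_iff]
  exact (WithZero.coe_le_coe (a := WithZero.unzero ((Valuation.ne_zero_iff (v.valuation F)).mpr hy))
    (b := WithZero.unzero ((Valuation.ne_zero_iff (v.valuation F)).mpr hx))).mp (by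
      rwa [WithZero.coe_unzero, WithZero.coe_unzero])

lemma ordp_add_min (x y : F) : min (ordp v x) (ordp v y) ≤ ordp v (x + y) := by
  by_cases hx : x = 0
  · subst hx; rw [zero_add]; simp [ordp]
  by_cases hy : y = 0
  · subst hy; rw [add_zero]; simp [ordp]
  by_cases hxy : x + y = 0
  · simp [ordp, hxy]
  have := Valuation.map_add (v.valuation F) x y
  rcases le_max_iff.mp this with h | h
  · exact min_le_of_left_le (ordp_mono v hx hxy h)
  · exact min_le_of_right_le (ordp_mono v hy hxy h)

end Aux

/-- If `2 · min(ord_p(a), ord_p(b)+n, ord_p(c)-n, ord_p(d)) = ord_p(λ)` with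
`λ = ad - bc ≠ 0`, then the entries of the square matrix
`[[a²+bc, b(a+d)],[c(a+d), bc+d²]]`, with the off-diagonal valuations shifted
by `±n`, all have `p`-adic valuation at least `ord_p(λ)`. -/
theorem square_matrix_entries_ord_ge {F : Type*} [Field F] [NumberField F]
    (v : HeightOneSpectrum (𝓞 F)) (a b c d : F) (lam : F)
    (hlam : lam = a * d - b * c) (hlam0 : lam ≠ 0) (n : ℤ)
    (h : 2 • min (min (ordp v a) (ordp v b + (n : WithTop ℤ)))
        (min (ordp v c + ((-n : ℤ) : WithTop ℤ)) (ordp v d)) = ordp v lam) :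
    ordp v lam ≤ ordp v (a ^ 2 + b * c) ∧
    ordp v lam ≤ ordp v (b * (a + d)) + (n : WithTop ℤ) ∧
    ordp v lam ≤ ordp v (c * (a + d)) + ((-n : ℤ) : WithTop ℤ) ∧
    ordp v lam ≤ ordp v (b * c + d ^ 2) := by
  set m := min (min (ordp v a) (ordp v b + (n : WithTop ℤ)))
        (min (ordp v c + ((-n : ℤ) : WithTop ℤ)) (ordp v d)) with hm
  have hlam2 : ordp v lam = m + m := by rw [← h, two_nsmul]
  have ha : m ≤ ordp v a := le_trans (min_le_left _ _) (min_le_left _ _)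
  have hb : m ≤ ordp v b + (n : WithTop ℤ) := le_trans (min_le_left _ _) (min_le_right _ _)
  have hc : m ≤ ordp v c + ((-n : ℤ) : WithTop ℤ) := le_trans (min_le_right _ _) (min_le_left _ _)
  have hd : m ≤ ordp v d := le_trans (min_le_right _ _) (min_le_right _ _)
  have hcancel : ((n : ℤ) : WithTop ℤ) + ((-n : ℤ) : WithTop ℤ) = 0 := by
    rw [← WithTop.coe_add]; simp
  have hbc : m + m ≤ ordp v b + ordp v c := by
    calc m + m ≤ (ordp v b + (n : WithTop ℤ)) + (ordp v c + ((-n : ℤ) : WithTop ℤ)) :=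
          add_le_add hb hc
      _ = (ordp v b + ordp v c) + (((n : ℤ) : WithTop ℤ) + ((-n : ℤ) : WithTop ℤ)) :=
          add_add_add_comm _ _ _ _
      _ = ordp v b + ordp v c := by rw [hcancel, add_zero]
  have had : m ≤ ordp v (a + d) := le_trans (le_min ha hd) (ordp_add_min v a d)
  rw [hlam2]
  refine ⟨?_, ?_, ?_, ?_⟩
  · refine le_trans ?_ (ordp_add_min v (a ^ 2) (b * c))
    refine le_min ?_ ?_
    · rw [sq, ordp_mul]; exact add_le_add ha ha
    · rw [ordp_mul]; exact hbc
  · rw [ordp_mul]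
    calc m + m ≤ (ordp v b + (n : WithTop ℤ)) + ordp v (a + d) := add_le_add hb had
      _ = ordp v b + ordp v (a + d) + (n : WithTop ℤ) := by rw [add_right_comm]
  · rw [ordp_mul]
    calc m + m ≤ (ordp v c + ((-n : ℤ) : WithTop ℤ)) + ordp v (a + d) := add_le_add hc had
      _ = ordp v c + ordp v (a + d) + ((-n : ℤ) : WithTop ℤ) := by rw [add_right_comm]
  · refine le_trans ?_ (ordp_add_min v (b * c) (d ^ 2))
    refine le_min ?_ ?_
    · rw [ordp_mul]; exact hbc
    · rw [sq, ordp_mul]; exact add_le_add hd hd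
end

section
/- Let q > 1 be real, t ∈ ℝ, s ∈ ℂ with Re(s) > 3/2, let u_1, u_2 be complex numbers of modulus 1, and let α, β be complex numbers with |α|, |β| ≤ q^{1/2} (Satake parameters). Define λ_k by the generating identity Σ_k λ_k X^k = 1/((1-αq^{1/2}X)(1-βq^{1/2}X)) in the sense λ_k = q^{k/2} Σ_{l=0}^k α^l β^{k-l}. Then Σ_{k=0}^{∞} λ_k u_2^k q^{-k(s-it)/2 - k/2} · (1 - u_1^{k+1} q^{-it(k+1)})/(1 - u_1 q^{-it}) = (1 - αβ u_1 u_2^2 q^{-s}) / [(1 - α u_2 q^{-(s-it)/2})(1 - β u_2 q^{-(s-it)/2})(1 - α u_1 u_2 q^{-(s+it)/2})(1 - β u_1 u_2 q^{-(s+it)/2})], provided all denominators are nonzero. -/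
open Complex

private lemma geom2 (x y : ℂ) (hx : ‖x‖ < 1) (hy : ‖y‖ < 1) :
    (Summable fun k : ℕ => ‖∑ l ∈ Finset.range (k + 1), x ^ l * y ^ (k - l)‖) ∧
      ∑' k : ℕ, ∑ l ∈ Finset.range (k + 1), x ^ l * y ^ (k - l) = (1 - x)⁻¹ * (1 - y)⁻¹ := by
  have hx' : Summable fun n : ℕ => ‖x ^ n‖ := by
    simpa [norm_pow] using summable_geometric_of_lt_one (norm_nonneg x) hx
  have hy' : Summable fun n : ℕ => ‖y ^ n‖ := by
    simpa [norm_pow] using summable_geometric_of_lt_one (norm_nonneg y) hy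
  refine ⟨summable_norm_sum_mul_range_of_summable_norm hx' hy', ?_⟩
  have := tsum_mul_tsum_eq_tsum_sum_range_of_summable_norm hx' hy'
  rw [tsum_geometric_of_norm_lt_one hx, tsum_geometric_of_norm_lt_one hy] at this
  exact this.symm

/-- Local Euler factor identity behind
`R_{χ₁,χ₂}(s) = L((s-it)/2, φ⊗χ₂) L((s+it)/2, φ⊗χ₁χ₂) / L(s, ωχ₁χ₂²)`:
with Hecke eigenvalues `λ_k = q^{k/2} ∑_{l≤k} αˡ β^{k-l}` and `|α|,|β| ≤ √q`,
`∑_k λ_k u₂^k q^{-k(s-it)/2 - k/2} σ_{-it}(χ₁,p^k) = (1 - αβu₁u₂² q^{-s}) / [⋯]`. -/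
theorem local_hecke_euler_identity (q : ℝ) (hq : 1 < q) (t : ℝ) (s : ℂ)
    (hs : (3 : ℝ) / 2 < s.re) (u1 u2 : ℂ) (hu1 : ‖u1‖ = 1) (hu2 : ‖u2‖ = 1)
    (α β : ℂ) (hα : ‖α‖ ≤ Real.sqrt q) (hβ : ‖β‖ ≤ Real.sqrt q)
    (lam : ℕ → ℂ)
    (hlam : ∀ k : ℕ, lam k =
      ((q ^ ((k : ℝ) / 2) : ℝ) : ℂ) * ∑ l ∈ Finset.range (k + 1), α ^ l * β ^ (k - l))
    (hd0 : 1 - u1 * (q : ℂ) ^ (-(I * t)) ≠ 0)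
    (hd1 : 1 - α * u2 * (q : ℂ) ^ (-(s - I * t) / 2) ≠ 0)
    (hd2 : 1 - β * u2 * (q : ℂ) ^ (-(s - I * t) / 2) ≠ 0)
    (hd3 : 1 - α * u1 * u2 * (q : ℂ) ^ (-(s + I * t) / 2) ≠ 0)
    (hd4 : 1 - β * u1 * u2 * (q : ℂ) ^ (-(s + I * t) / 2) ≠ 0) :
    Summable (fun k : ℕ => ‖lam k * u2 ^ k *
        (q : ℂ) ^ (-((k : ℂ) * (s - I * t)) / 2 - (k : ℂ) / 2) *
        ((1 - u1 ^ (k + 1) * (q : ℂ) ^ (-(I * t) * ((k : ℂ) + 1))) /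
          (1 - u1 * (q : ℂ) ^ (-(I * t))))‖) ∧
    ∑' k : ℕ, lam k * u2 ^ k *
        (q : ℂ) ^ (-((k : ℂ) * (s - I * t)) / 2 - (k : ℂ) / 2) *
        ((1 - u1 ^ (k + 1) * (q : ℂ) ^ (-(I * t) * ((k : ℂ) + 1))) /
          (1 - u1 * (q : ℂ) ^ (-(I * t)))) =
      (1 - α * β * u1 * u2 ^ 2 * (q : ℂ) ^ (-s)) /
        ((1 - α * u2 * (q : ℂ) ^ (-(s - I * t) / 2)) *
          (1 - β * u2 * (q : ℂ) ^ (-(s - I * t) / 2)) *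
          (1 - α * u1 * u2 * (q : ℂ) ^ (-(s + I * t) / 2)) *
          (1 - β * u1 * u2 * (q : ℂ) ^ (-(s + I * t) / 2))) := by
  have hq0 : (0 : ℝ) < q := lt_trans one_pos hq
  have hqc : (q : ℂ) ≠ 0 := by exact_mod_cast hq0.ne'
  have hcp : ∀ z : ℂ, (q : ℂ) ^ z = Complex.exp ((Real.log q : ℂ) * z) := fun z => by
    rw [cpow_def_of_ne_zero hqc, ofReal_log hq0.le]
  -- abbreviations
  set Q : ℂ := (q : ℂ) ^ (-(s - I * ↑t) / 2) with hQ
  set r : ℂ := u1 * (q : ℂ) ^ (-(I * ↑t)) with hrdef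
  set A : ℂ := α * u2 * Q with hAdef
  set B : ℂ := β * u2 * Q with hBdef
  -- norm estimates
  have hQnorm : ‖Q‖ = q ^ ((-(s - I * (t : ℂ)) / 2).re) := by
    rw [hQ, norm_cpow_eq_rpow_re_of_pos hq0]
  have hre : (-(s - I * (t : ℂ)) / 2).re = -s.re / 2 := by
    simp [Complex.div_re, Complex.normSq]
  have hQlt : Real.sqrt q * ‖Q‖ < 1 := by
    rw [hQnorm, hre, Real.sqrt_eq_rpow, ← Real.rpow_add hq0]
    exact Real.rpow_lt_one_of_one_lt_of_neg hq (by linarith)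
  have hAlt : ‖A‖ < 1 := by
    calc ‖A‖ = ‖α‖ * ‖u2‖ * ‖Q‖ := by rw [hAdef, norm_mul, norm_mul]
    _ = ‖α‖ * ‖Q‖ := by rw [hu2, mul_one]
    _ ≤ Real.sqrt q * ‖Q‖ := by
        exact mul_le_mul_of_nonneg_right hα (norm_nonneg _)
    _ < 1 := hQlt
  have hBlt : ‖B‖ < 1 := by
    calc ‖B‖ = ‖β‖ * ‖u2‖ * ‖Q‖ := by rw [hBdef, norm_mul, norm_mul]
    _ = ‖β‖ * ‖Q‖ := by rw [hu2, mul_one]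
    _ ≤ Real.sqrt q * ‖Q‖ := by
        exact mul_le_mul_of_nonneg_right hβ (norm_nonneg _)
    _ < 1 := hQlt
  have hrnorm : ‖r‖ = 1 := by
    have h0 : ((-(I * (t : ℂ))).re) = 0 := by simp
    rw [hrdef, norm_mul, hu1, one_mul, norm_cpow_eq_rpow_re_of_pos hq0, h0,
      Real.rpow_zero]
  have hArlt : ‖A * r‖ < 1 := by rw [norm_mul, hrnorm, mul_one]; exact hAlt
  have hBrlt : ‖B * r‖ < 1 := by rw [norm_mul, hrnorm, mul_one]; exact hBlt
  -- exponent identities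
  have e1 : ∀ k : ℕ, ((q ^ ((k : ℝ) / 2) : ℝ) : ℂ) *
      (q : ℂ) ^ (-((k : ℂ) * (s - I * ↑t)) / 2 - (k : ℂ) / 2) = Q ^ k := by
    intro k
    rw [hQ, hcp, hcp, ← Complex.exp_nat_mul, Real.rpow_def_of_pos hq0, Complex.ofReal_exp,
      ← Complex.exp_add]
    congr 1
    push_cast
    ring
  have key2 : Complex.exp ((Real.log q : ℂ) * (-(s - I * ↑t) / 2)) *
      Complex.exp ((Real.log q : ℂ) * (-(I * ↑t))) =
      Complex.exp ((Real.log q : ℂ) * (-(s + I * ↑t) / 2)) := by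
    rw [← Complex.exp_add]; congr 1; ring
  have key4 : Complex.exp ((Real.log q : ℂ) * (-(s - I * ↑t) / 2)) *
      Complex.exp ((Real.log q : ℂ) * (-(s - I * ↑t) / 2)) *
      Complex.exp ((Real.log q : ℂ) * (-(I * ↑t))) =
      Complex.exp ((Real.log q : ℂ) * (-s)) := by
    rw [← Complex.exp_add, ← Complex.exp_add]; congr 1; ring
  have e2a : α * u1 * u2 * (q : ℂ) ^ (-(s + I * ↑t) / 2) = A * r := by
    rw [hAdef, hrdef, hQ, hcp, hcp, hcp]
    linear_combination (α * u1 * u2) * key2.symm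
  have e2b : β * u1 * u2 * (q : ℂ) ^ (-(s + I * ↑t) / 2) = B * r := by
    rw [hBdef, hrdef, hQ, hcp, hcp, hcp]
    linear_combination (β * u1 * u2) * key2.symm
  have e4 : α * β * u1 * u2 ^ 2 * (q : ℂ) ^ (-s) = A * B * r := by
    rw [hAdef, hBdef, hrdef, hQ, hcp, hcp, hcp]
    linear_combination (α * β * u1 * u2 ^ 2) * key4.symm
  have e3 : ∀ k : ℕ, u1 ^ (k + 1) * (q : ℂ) ^ (-(I * ↑t) * ((k : ℂ) + 1)) = r ^ (k + 1) := by
    intro k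
    rw [hrdef, mul_pow, hcp, hcp, ← Complex.exp_nat_mul]
    congr 2
    push_cast
    ring
  -- the two geometric-type series
  set g : ℕ → ℂ := fun k => ∑ l ∈ Finset.range (k + 1), A ^ l * B ^ (k - l) with hg
  set g' : ℕ → ℂ := fun k => ∑ l ∈ Finset.range (k + 1), (A * r) ^ l * (B * r) ^ (k - l) with hg'
  obtain ⟨Sg, Tg⟩ := geom2 A B hAlt hBlt
  obtain ⟨Sg', Tg'⟩ := geom2 (A * r) (B * r) hArlt hBrlt
  have hgg' : ∀ k : ℕ, r * g' k = r ^ (k + 1) * g k := by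
    intro k
    rw [hg, hg', Finset.mul_sum, Finset.mul_sum]
    refine Finset.sum_congr rfl fun l hl => ?_
    have hlk : l ≤ k := Nat.lt_succ_iff.mp (Finset.mem_range.mp hl)
    have : (A * r) ^ l * (B * r) ^ (k - l) = A ^ l * B ^ (k - l) * (r ^ l * r ^ (k - l)) := by
      ring
    rw [this, ← pow_add, Nat.add_sub_cancel' hlk]
    ring
  -- termwise identity
  have hterm : ∀ k : ℕ, lam k * u2 ^ k *
      (q : ℂ) ^ (-((k : ℂ) * (s - I * ↑t)) / 2 - (k : ℂ) / 2) *
      ((1 - u1 ^ (k + 1) * (q : ℂ) ^ (-(I * ↑t) * ((k : ℂ) + 1))) /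
        (1 - u1 * (q : ℂ) ^ (-(I * ↑t)))) =
      (g k - r * g' k) * (1 - r)⁻¹ := by
    intro k
    have h1 : lam k * u2 ^ k *
        (q : ℂ) ^ (-((k : ℂ) * (s - I * ↑t)) / 2 - (k : ℂ) / 2) = g k := by
      rw [hlam k, hg]
      calc ((q ^ ((k : ℝ) / 2) : ℝ) : ℂ) * (∑ l ∈ Finset.range (k + 1), α ^ l * β ^ (k - l)) *
            u2 ^ k * (q : ℂ) ^ (-((k : ℂ) * (s - I * ↑t)) / 2 - (k : ℂ) / 2)
          = (∑ l ∈ Finset.range (k + 1), α ^ l * β ^ (k - l)) * (Q ^ k * u2 ^ k) := by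
            rw [← e1 k]; ring
        _ = ∑ l ∈ Finset.range (k + 1), A ^ l * B ^ (k - l) := by
            rw [Finset.sum_mul]
            refine Finset.sum_congr rfl fun l hl => ?_
            have hlk : l ≤ k := Nat.lt_succ_iff.mp (Finset.mem_range.mp hl)
            have h2 : A ^ l * B ^ (k - l) =
                α ^ l * β ^ (k - l) * ((u2 * Q) ^ l * (u2 * Q) ^ (k - l)) := by
              rw [hAdef, hBdef]; ring
            rw [h2, ← pow_add, Nat.add_sub_cancel' hlk]
            ring
    rw [h1, e3 k, div_eq_mul_inv, hgg' k]
    ring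
  -- summability
  have Snorm : Summable fun k : ℕ => ‖(g k - r * g' k) * (1 - r)⁻¹‖ := by
    have hb : Summable fun k : ℕ => (‖g k‖ + ‖g' k‖) * ‖(1 - r)⁻¹‖ :=
      (Sg.add Sg').mul_right _
    refine Summable.of_nonneg_of_le (fun k => norm_nonneg _) (fun k => ?_) hb
    rw [norm_mul]
    refine mul_le_mul_of_nonneg_right ?_ (norm_nonneg _)
    calc ‖g k - r * g' k‖ ≤ ‖g k‖ + ‖r * g' k‖ := norm_sub_le _ _
      _ = ‖g k‖ + ‖g' k‖ := by rw [norm_mul, hrnorm, one_mul]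
  constructor
  · exact Snorm.congr (fun k => congrArg norm (hterm k).symm)
  · calc (∑' k : ℕ, lam k * u2 ^ k *
          (q : ℂ) ^ (-((k : ℂ) * (s - I * ↑t)) / 2 - (k : ℂ) / 2) *
          ((1 - u1 ^ (k + 1) * (q : ℂ) ^ (-(I * ↑t) * ((k : ℂ) + 1))) /
            (1 - u1 * (q : ℂ) ^ (-(I * ↑t)))))
        = ∑' k : ℕ, (g k - r * g' k) * (1 - r)⁻¹ := by
          exact tsum_congr hterm
      _ = (∑' k : ℕ, (g k - r * g' k)) * (1 - r)⁻¹ := tsum_mul_right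
      _ = ((∑' k, g k) - ∑' k, r * g' k) * (1 - r)⁻¹ := by
          rw [Summable.tsum_sub Sg.of_norm ((Sg'.of_norm).mul_left r)]
      _ = ((1 - A)⁻¹ * (1 - B)⁻¹ - r * ((1 - A * r)⁻¹ * (1 - B * r)⁻¹)) * (1 - r)⁻¹ := by
          rw [tsum_mul_left, Tg, Tg']
      _ = (1 - α * β * u1 * u2 ^ 2 * (q : ℂ) ^ (-s)) /
            ((1 - A) * (1 - B) * (1 - α * u1 * u2 * (q : ℂ) ^ (-(s + I * ↑t) / 2)) *
              (1 - β * u1 * u2 * (q : ℂ) ^ (-(s + I * ↑t) / 2))) := by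
          rw [e4, e2a, e2b]
          rw [e2a] at hd3
          rw [e2b] at hd4
          have h1r : (1 : ℂ) - r ≠ 0 := hd0
          field_simp
          ring
end
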